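/- arXiv:2301.00778 — 3 statements merged into one kernel-verified Lean document; each statement's English description precedes it below -/
import Mathlib

section
/- Well-definedness of π⁻ (second part of Lemma 5.1): For every π, π'' ∈ ℝ[[z_k,z_n]], every c ∈ ℝ[[z_k]], and every multi-index β: only finitely many k ∈ ℕ satisfy (z_k π^k π'')_β ≠ 0, and only finitely many l ∈ ℕ satisfy (π^l (D⁽⁰⁾)^l c)_β ≠ 0. Consequently, for any ξ ∈ ℝ, π⁻ := Σ_{k≥0} z_k π^k π'' − Σ_{l≥0} (1/l!) π^l (D⁽⁰⁾)^l c + ξ 𝟙 is a well-defined element of ℝ[[z_k,z_n]]. -/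
open MvPowerSeries

noncomputable section

/-- Indices `n ∈ ℕ² \ {(0,0)}` for the variables `z_n`. -/
abbrev Pos2 : Type := {p : ℕ × ℕ // p ≠ (0, 0)}

/-- The variables: `z_k` for `k ∈ ℕ` (left) and `z_n` for `n ∈ ℕ²\{0}` (right). -/
abbrev Var : Type := ℕ ⊕ Pos2

/-- Multi-indices: finitely supported functions from the variables to ℕ. -/
abbrev MIdx : Type := Var →₀ ℕ

/-- The algebra ℝ[[z_k, z_n]] of formal power series. -/
abbrev FPS : Type := MvPowerSeries Var ℝ

/-- The variable `z_k` as a power series. -/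
def zk (k : ℕ) : FPS := MvPowerSeries.X (Sum.inl k)

/-- The variable `z_n` as a power series. -/
def zn (n : Pos2) : FPS := MvPowerSeries.X (Sum.inr n)

/-- The derivation `D⁽⁰⁾ = Σ_k (k+1) z_{k+1} ∂_{z_k}`, defined componentwise by
`(D⁽⁰⁾π)_β = Σ_{k, β(k+1) ≥ 1} (k+1)(β(k)+1) π_{β + e_k - e_{k+1}}`. -/
def Dzero (π : FPS) : FPS := fun β =>
  ∑ j ∈ β.support,
    (match j with
     | Sum.inl (k + 1) =>
         ((k : ℝ) + 1) * ((β (Sum.inl k) : ℝ) + 1) *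
           MvPowerSeries.coeff (R := ℝ)
             (β + Finsupp.single (Sum.inl k) 1 - Finsupp.single (Sum.inl (k + 1)) 1) π
     | _ => 0)

/-- `c ∈ ℝ[[z_k]]`: the subalgebra of series with no `z_n`-dependence. -/
def OnlyZk (c : FPS) : Prop :=
  ∀ β : MIdx, (∃ n : Pos2, β (Sum.inr n) ≠ 0) → MvPowerSeries.coeff (R := ℝ) β c = 0

/-- `[β] := Σ_k k β(k) − Σ_n β(n)`. -/
def bracketZ (β : MIdx) : ℤ :=
  β.sum fun j m => (match j with | Sum.inl k => (k : ℤ) | Sum.inr _ => -1) * (m : ℤ)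

/-- `|β|_p := Σ_n |n| β(n)` where `|n| = n₁ + 2 n₂`. -/
def homP (β : MIdx) : ℝ :=
  β.sum fun j m =>
    (match j with | Sum.inl _ => (0 : ℝ) | Sum.inr n => (n.val.1 : ℝ) + 2 * n.val.2) * (m : ℝ)

/-- The homogeneity `|β| := α (1 + [β]) + |β|_p`. -/
def hom (α : ℝ) (β : MIdx) : ℝ := α * (1 + (bracketZ β : ℝ)) + homP β

/-- `|β|_≺ := |β| + λ β(0)`; the ordering is `γ ≺ β iff |γ|_≺ < |β|_≺`. -/
def ordP (α lam : ℝ) (β : MIdx) : ℝ := hom α β + lam * (β (Sum.inl 0) : ℝ)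

/-- Weight of a variable: `k` for `z_k`, `0` for `z_n`. -/
def wvar : Var → ℕ := fun j => match j with | Sum.inl k => k | Sum.inr _ => 0

/-- Weight of a multi-index: `Σ_k k β(k)`. -/
def wgt (β : MIdx) : ℕ := β.sum fun j m => wvar j * m

lemma wgt_add (a b : MIdx) : wgt (a + b) = wgt a + wgt b :=
  Finsupp.sum_add_index' (fun _ => mul_zero _) (fun _ m n => mul_add _ m n)

lemma wgt_single (j : Var) (m : ℕ) : wgt (Finsupp.single j m) = wvar j * m :=
  Finsupp.sum_single_index (mul_zero _)

lemma Dzero_vanish (l : ℕ) : ∀ (β : MIdx) (x : FPS), wgt β < l →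
    MvPowerSeries.coeff (R := ℝ) β (Dzero^[l] x) = 0 := by
  induction l with
  | zero => exact fun β x h => absurd h (Nat.not_lt_zero _)
  | succ l ih =>
    intro β x h
    rw [Function.iterate_succ_apply', MvPowerSeries.coeff_apply]
    show (∑ j ∈ β.support, _) = 0
    apply Finset.sum_eq_zero
    intro j hj
    rcases j with k | n
    · cases k with
      | zero => rfl
      | succ k =>
        show ((k : ℝ) + 1) * ((β (Sum.inl k) : ℝ) + 1) *
          MvPowerSeries.coeff (R := ℝ)
            (β + Finsupp.single (Sum.inl k) 1 - Finsupp.single (Sum.inl (k + 1)) 1)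
            (Dzero^[l] x) = 0
        have hβj : β (Sum.inl (k + 1)) ≠ 0 := Finsupp.mem_support_iff.mp hj
        have hle : Finsupp.single (Sum.inl (k + 1) : Var) 1
            ≤ β + Finsupp.single (Sum.inl k) 1 := by
          rw [Finsupp.single_le_iff, Finsupp.add_apply]
          exact le_trans (Nat.one_le_iff_ne_zero.mpr hβj) (Nat.le_add_right _ _)
        have hsum : (β + Finsupp.single (Sum.inl k) 1 - Finsupp.single (Sum.inl (k + 1)) 1)
            + Finsupp.single (Sum.inl (k + 1)) 1 = β + Finsupp.single (Sum.inl k) 1 :=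
          tsub_add_cancel_of_le hle
        have hw := congrArg wgt hsum
        rw [wgt_add, wgt_add, wgt_single, wgt_single] at hw
        have hw' : wgt (β + Finsupp.single (Sum.inl k) 1
            - Finsupp.single (Sum.inl (k + 1)) 1) + (k + 1) = wgt β + k := by
          simpa [wvar] using hw
        have : wgt (β + Finsupp.single (Sum.inl k) 1
            - Finsupp.single (Sum.inl (k + 1)) 1) < l := by omega
        rw [ih _ x this, mul_zero]
    · rfl

lemma lset_vanish (π c : FPS) (β : MIdx) (l : ℕ) (h : wgt β < l) :
    MvPowerSeries.coeff (R := ℝ) β (π ^ l * Dzero^[l] c) = 0 := by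
  rw [MvPowerSeries.coeff_mul]
  apply Finset.sum_eq_zero
  intro p hp
  rw [Finset.HasAntidiagonal.mem_antidiagonal] at hp
  have h2 : wgt p.2 ≤ wgt β := by
    have := congrArg wgt hp
    rw [wgt_add] at this
    omega
  rw [Dzero_vanish l p.2 c (lt_of_le_of_lt h2 h), mul_zero]

lemma kset_mem (π π'' : FPS) (β : MIdx) (k : ℕ)
    (h : MvPowerSeries.coeff (R := ℝ) β (zk k * π ^ k * π'') ≠ 0) : β (Sum.inl k) ≠ 0 := by
  classical
  intro h0
  apply h
  rw [MvPowerSeries.coeff_mul]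
  apply Finset.sum_eq_zero
  intro p hp
  rw [Finset.HasAntidiagonal.mem_antidiagonal] at hp
  rw [MvPowerSeries.coeff_mul]
  rw [Finset.sum_mul]
  apply Finset.sum_eq_zero
  intro q hq
  rw [Finset.HasAntidiagonal.mem_antidiagonal] at hq
  rw [zk, MvPowerSeries.coeff_X]
  split
  · next heq =>
    exfalso
    have hle : q.1 (Sum.inl k) ≤ β (Sum.inl k) := by
      rw [← hp, ← hq, Finsupp.add_apply, Finsupp.add_apply]
      omega
    rw [heq, Finsupp.single_apply, if_pos rfl, h0] at hle
    omega
  · rw [zero_mul, zero_mul]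

/-- Well-definedness of `π⁻` (second part of Lemma 5.1): for `π, π'' ∈ ℝ[[z_k,z_n]]`
and `c ∈ ℝ[[z_k]]`, both sums in `π⁻` are componentwise finite; consequently, for any
`ξ ∈ ℝ`, `π⁻ = Σ_k z_k π^k π'' − Σ_l (1/l!) π^l (D⁽⁰⁾)^l c + ξ 𝟙` is a well-defined
element of ℝ[[z_k,z_n]]. -/
theorem stmt_9 (π π'' c : FPS) (hc : OnlyZk c) :
    (∀ β : MIdx,
      {k : ℕ | MvPowerSeries.coeff (R := ℝ) β (zk k * π ^ k * π'') ≠ 0}.Finite ∧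
      {l : ℕ | MvPowerSeries.coeff (R := ℝ) β (π ^ l * Dzero^[l] c) ≠ 0}.Finite) ∧
    ∀ ξ : ℝ, ∃ pm : FPS, ∀ β : MIdx,
      MvPowerSeries.coeff (R := ℝ) β pm =
        (∑ᶠ k : ℕ, MvPowerSeries.coeff (R := ℝ) β (zk k * π ^ k * π''))
          - (∑ᶠ l : ℕ, ((l.factorial : ℝ))⁻¹ *
              MvPowerSeries.coeff (R := ℝ) β (π ^ l * Dzero^[l] c))
          + ξ * MvPowerSeries.coeff (R := ℝ) β 1 := by
  classical
  have hkfin : ∀ β : MIdx,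
      {k : ℕ | MvPowerSeries.coeff (R := ℝ) β (zk k * π ^ k * π'') ≠ 0}.Finite := by
    intro β
    apply Set.Finite.subset (Set.Finite.preimage Sum.inl_injective.injOn
      β.support.finite_toSet)
    intro k hk
    exact Finsupp.mem_support_iff.mpr (kset_mem π π'' β k hk)
  have hlfin : ∀ β : MIdx,
      {l : ℕ | MvPowerSeries.coeff (R := ℝ) β (π ^ l * Dzero^[l] c) ≠ 0}.Finite := by
    intro β
    apply Set.Finite.subset (Set.finite_Iic (wgt β))
    intro l hl
    by_contra hlt
    exact hl (lset_vanish π c β l (by simpa [Set.mem_Iic] using hlt))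
  refine ⟨fun β => ⟨hkfin β, hlfin β⟩, fun ξ => ⟨fun β =>
    (∑ᶠ k : ℕ, MvPowerSeries.coeff (R := ℝ) β (zk k * π ^ k * π''))
      - (∑ᶠ l : ℕ, ((l.factorial : ℝ))⁻¹ *
          MvPowerSeries.coeff (R := ℝ) β (π ^ l * Dzero^[l] c))
      + ξ * MvPowerSeries.coeff (R := ℝ) β 1, fun β => rfl⟩⟩
end
end

section
/- Triangular dependence of π⁻ with respect to the ordering ≺ (property (ks05)): Fix a multi-index β and ξ ∈ ℝ. Let π, π'', ρ, ρ'' ∈ ℝ[[z_k,z_n]] and c, d ∈ ℝ[[z_k]] be such that π_γ = ρ_γ, π''_γ = ρ''_γ and c_γ = d_γ for every multi-index γ with γ ≺ β. Then, with π⁻(π,π'',c,ξ) := Σ_{k≥0} z_k π^k π'' − Σ_{l≥0} (1/l!) π^l (D⁽⁰⁾)^l c + ξ 𝟙, one has π⁻(π,π'',c,ξ)_β + c_β = π⁻(ρ,ρ'',d,ξ)_β + d_β; that is, the β-component of π⁻ apart from the explicit counterterm −c_β depends on (π, π'', c) only through components indexed by multi-indices preceding β. -/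
open MvPowerSeries

noncomputable section

/-- `π⁻ := Σ_{k≥0} z_k π^k π'' − Σ_{l≥0} (1/l!) π^l (D⁽⁰⁾)^l c + ξ 𝟙`, defined
componentwise (all sums are componentwise finite). -/
def piminus (π π'' c : FPS) (ξ : ℝ) : FPS := fun β =>
  (∑ᶠ k : ℕ, MvPowerSeries.coeff (R := ℝ) β (zk k * π ^ k * π''))
    - (∑ᶠ l : ℕ, ((l.factorial : ℝ))⁻¹ * MvPowerSeries.coeff (R := ℝ) β (π ^ l * Dzero^[l] c))
    + ξ * MvPowerSeries.coeff (R := ℝ) β 1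

-- auxiliary weight sum
def wsum (α lam : ℝ) (δ : MIdx) : ℝ :=
  α * (bracketZ δ : ℝ) + homP δ + lam * (δ (Sum.inl 0) : ℝ)

lemma ordP_eq_wsum (α lam : ℝ) (β : MIdx) : ordP α lam β = α + wsum α lam β := by
  simp only [ordP, hom, wsum]; ring

lemma bracketZ_add (x y : MIdx) : bracketZ (x + y) = bracketZ x + bracketZ y := by
  unfold bracketZ
  apply Finsupp.sum_add_index' (fun j => by simp) (fun j m n => by push_cast; ring)

lemma homP_add (x y : MIdx) : homP (x + y) = homP x + homP y := by
  unfold homP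
  apply Finsupp.sum_add_index' (fun j => by simp) (fun j m n => by push_cast; ring)

lemma wsum_add (α lam : ℝ) (x y : MIdx) :
    wsum α lam (x + y) = wsum α lam x + wsum α lam y := by
  simp only [wsum, bracketZ_add, homP_add, Finsupp.add_apply]
  push_cast; ring

lemma wsum_nonneg {α lam : ℝ} (hα0 : 0 < α) (hα1 : α < 1) (hlam0 : 0 < lam) (δ : MIdx) :
    0 ≤ wsum α lam δ := by
  have h1 : α * (bracketZ δ : ℝ) + homP δ =
      ∑ j ∈ δ.support,
        ((α * (match j with | Sum.inl k => (k : ℝ) | Sum.inr _ => -1) +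
          (match j with | Sum.inl _ => (0:ℝ) | Sum.inr n => (n.val.1 : ℝ) + 2 * n.val.2))
          * (δ j : ℝ)) := by
    unfold bracketZ homP Finsupp.sum
    push_cast
    rw [Finset.mul_sum, ← Finset.sum_add_distrib]
    apply Finset.sum_congr rfl
    intro j _
    rcases j with k | n <;> push_cast <;> ring
  have hterm : ∀ j ∈ δ.support,
      0 ≤ ((α * (match j with | Sum.inl k => (k : ℝ) | Sum.inr _ => -1) +
          (match j with | Sum.inl _ => (0:ℝ) | Sum.inr n => (n.val.1 : ℝ) + 2 * n.val.2))
          * (δ j : ℝ)) := by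
    intro j _
    rcases j with k | n
    · have h0 : (0:ℝ) ≤ (k:ℝ) := Nat.cast_nonneg k
      have : (0:ℝ) ≤ α * (k:ℝ) := mul_nonneg hα0.le h0
      have hd : (0:ℝ) ≤ (δ (Sum.inl k) : ℝ) := Nat.cast_nonneg _
      simp only []
      nlinarith [hd]
    · have hn : (1:ℝ) ≤ (n.val.1 : ℝ) + 2 * n.val.2 := by
        have : 1 ≤ n.val.1 + 2 * n.val.2 := by
          have hab : ¬(n.val.1 = 0 ∧ n.val.2 = 0) := by
            simpa [Prod.ext_iff] using n.prop
          omega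
        exact_mod_cast this
      have hd : (0:ℝ) ≤ (δ (Sum.inr n) : ℝ) := Nat.cast_nonneg _
      simp only []
      nlinarith [hd]
  unfold wsum
  rw [h1]
  have := Finset.sum_nonneg hterm
  positivity

lemma wsum_pos {α lam : ℝ} (hα0 : 0 < α) (hα1 : α < 1) (hlam0 : 0 < lam) {δ : MIdx}
    (hδ : δ ≠ 0) : 0 < wsum α lam δ := by
  obtain ⟨j, hj⟩ := Finsupp.support_nonempty_iff.mpr hδ
  have hjne : δ j ≠ 0 := Finsupp.mem_support_iff.mp hj
  have h1 : α * (bracketZ δ : ℝ) + homP δ =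
      ∑ j ∈ δ.support,
        ((α * (match j with | Sum.inl k => (k : ℝ) | Sum.inr _ => -1) +
          (match j with | Sum.inl _ => (0:ℝ) | Sum.inr n => (n.val.1 : ℝ) + 2 * n.val.2))
          * (δ j : ℝ)) := by
    unfold bracketZ homP Finsupp.sum
    push_cast
    rw [Finset.mul_sum, ← Finset.sum_add_distrib]
    apply Finset.sum_congr rfl
    intro j _
    rcases j with k | n <;> push_cast <;> ring
  have hterm : ∀ j ∈ δ.support,
      0 ≤ ((α * (match j with | Sum.inl k => (k : ℝ) | Sum.inr _ => -1) +
          (match j with | Sum.inl _ => (0:ℝ) | Sum.inr n => (n.val.1 : ℝ) + 2 * n.val.2))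
          * (δ j : ℝ)) := by
    intro j _
    rcases j with k | n
    · have h0 : (0:ℝ) ≤ (k:ℝ) := Nat.cast_nonneg k
      have : (0:ℝ) ≤ α * (k:ℝ) := mul_nonneg hα0.le h0
      have hd : (0:ℝ) ≤ (δ (Sum.inl k) : ℝ) := Nat.cast_nonneg _
      simp only []
      nlinarith [hd]
    · have hn : (1:ℝ) ≤ (n.val.1 : ℝ) + 2 * n.val.2 := by
        have : 1 ≤ n.val.1 + 2 * n.val.2 := by
          have hab : ¬(n.val.1 = 0 ∧ n.val.2 = 0) := by
            simpa [Prod.ext_iff] using n.prop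
          omega
        exact_mod_cast this
      have hd : (0:ℝ) ≤ (δ (Sum.inr n) : ℝ) := Nat.cast_nonneg _
      simp only []
      nlinarith [hd]
  have hlamnn : (0:ℝ) ≤ lam * (δ (Sum.inl 0) : ℝ) :=
    mul_nonneg hlam0.le (Nat.cast_nonneg _)
  have hdj : (1:ℝ) ≤ (δ j : ℝ) := by exact_mod_cast Nat.one_le_iff_ne_zero.mpr hjne
  unfold wsum
  rw [h1]
  rcases j with (_ | k) | n
  · -- j = inl 0 : use the lam term
    have hpos : (0:ℝ) < lam * (δ (Sum.inl 0) : ℝ) := by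
      have : (1:ℝ) ≤ (δ (Sum.inl 0) : ℝ) := hdj
      nlinarith
    have := Finset.sum_nonneg hterm
    linarith
  · -- j = inl (k+1)
    have hpos : 0 < ∑ j ∈ δ.support,
        ((α * (match j with | Sum.inl k => (k : ℝ) | Sum.inr _ => -1) +
          (match j with | Sum.inl _ => (0:ℝ) | Sum.inr n => (n.val.1 : ℝ) + 2 * n.val.2))
          * (δ j : ℝ)) := by
      refine Finset.sum_pos' hterm ⟨Sum.inl (k+1), hj, ?_⟩
      simp only []
      have : (0:ℝ) < α * ((k:ℝ)+1) := by nlinarith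
      push_cast
      nlinarith
    linarith
  · -- j = inr n
    have hpos : 0 < ∑ j ∈ δ.support,
        ((α * (match j with | Sum.inl k => (k : ℝ) | Sum.inr _ => -1) +
          (match j with | Sum.inl _ => (0:ℝ) | Sum.inr n => (n.val.1 : ℝ) + 2 * n.val.2))
          * (δ j : ℝ)) := by
      refine Finset.sum_pos' hterm ⟨Sum.inr n, hj, ?_⟩
      have hn : (1:ℝ) ≤ (n.val.1 : ℝ) + 2 * n.val.2 := by
        have : 1 ≤ n.val.1 + 2 * n.val.2 := by
          have hab : ¬(n.val.1 = 0 ∧ n.val.2 = 0) := by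
            simpa [Prod.ext_iff] using n.prop
          omega
        exact_mod_cast this
      simp only []
      nlinarith
    linarith

lemma ordP_lt_of_le_ne {α lam : ℝ} (hα0 : 0 < α) (hα1 : α < 1) (hlam0 : 0 < lam)
    {γ β : MIdx} (hle : γ ≤ β) (hne : γ ≠ β) : ordP α lam γ < ordP α lam β := by
  have heq : γ + (β - γ) = β := add_tsub_cancel_of_le hle
  have hδ : β - γ ≠ 0 := by
    intro h
    apply hne
    rw [h, add_zero] at heq
    exact heq
  have := wsum_pos hα0 hα1 hlam0 (lam := lam) hδ
  rw [ordP_eq_wsum, ordP_eq_wsum, ← heq, wsum_add]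
  linarith

lemma wsum_single_inl (α lam : ℝ) (k : ℕ) :
    wsum α lam (Finsupp.single (Sum.inl k) 1) = α * k + (if k = 0 then lam else 0) := by
  have hb : bracketZ (Finsupp.single (Sum.inl k) 1) = k := by
    unfold bracketZ
    rw [Finsupp.sum_single_index] <;> simp
  have hp : homP (Finsupp.single (Sum.inl k) 1) = 0 := by
    unfold homP
    rw [Finsupp.sum_single_index] <;> simp
  unfold wsum
  rw [hb, hp, Finsupp.single_apply]
  rcases eq_or_ne k 0 with h | h
  · subst h; simp
  · have : ¬(Sum.inl k = (Sum.inl 0 : Var)) := by simp [h]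
    simp [h, this]

lemma ordP_shift {α lam : ℝ} (hα0 : 0 < α) (hα1 : α < 1) (hlam0 : 0 < lam) (hlam : lam < α)
    {γ : MIdx} {k : ℕ} (h : γ (Sum.inl (k+1)) ≠ 0) :
    ordP α lam (γ + Finsupp.single (Sum.inl k) 1 - Finsupp.single (Sum.inl (k+1)) 1)
      < ordP α lam γ := by
  set γ' := γ + Finsupp.single (Sum.inl k) 1 - Finsupp.single (Sum.inl (k+1)) 1 with hγ'
  have hle : Finsupp.single (Sum.inl (k+1)) 1 ≤ γ + Finsupp.single (Sum.inl k) 1 := by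
    rw [Finsupp.single_le_iff, Finsupp.add_apply]
    omega
  have heq : γ' + Finsupp.single (Sum.inl (k+1)) 1 = γ + Finsupp.single (Sum.inl k) 1 :=
    tsub_add_cancel_of_le hle
  have hw := congrArg (wsum α lam) heq
  rw [wsum_add, wsum_add, wsum_single_inl, wsum_single_inl] at hw
  rw [ordP_eq_wsum, ordP_eq_wsum]
  push_cast at hw
  split_ifs at hw with hk
  · simp only [hk] at hw ⊢
    norm_num at hw
    linarith
  · norm_num at hw
    linarith [mul_pos hα0 (by norm_num : (0:ℝ) < 1)]

def Agree (β : MIdx) (a b : FPS) : Prop :=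
  ∀ γ : MIdx, γ ≤ β → γ ≠ β → MvPowerSeries.coeff (R := ℝ) γ a = MvPowerSeries.coeff (R := ℝ) γ b

lemma Agree.mul {β : MIdx} {a b a' b' : FPS} (h : Agree β a b) (h' : Agree β a' b') :
    Agree β (a * a') (b * b') := by
  intro γ hle hne
  classical
  rw [MvPowerSeries.coeff_mul, MvPowerSeries.coeff_mul]
  apply Finset.sum_congr rfl
  intro p hp
  rw [Finset.HasAntidiagonal.mem_antidiagonal] at hp
  have h1le : p.1 ≤ γ := hp ▸ self_le_add_right p.1 p.2
  have h2le : p.2 ≤ γ := hp ▸ self_le_add_left p.2 p.1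
  have h1ne : p.1 ≠ β := fun he => hne (le_antisymm hle (he ▸ h1le))
  have h2ne : p.2 ≠ β := fun he => hne (le_antisymm hle (he ▸ h2le))
  rw [h _ (h1le.trans hle) h1ne, h' _ (h2le.trans hle) h2ne]

lemma Agree.pow {β : MIdx} {a b : FPS} (h : Agree β a b) (k : ℕ) :
    Agree β (a ^ k) (b ^ k) := by
  induction k with
  | zero => intro γ _ _; rfl
  | succ k ih => rw [pow_succ, pow_succ]; exact ih.mul h

lemma Dzero_congr {α lam : ℝ} (hα0 : 0 < α) (hα1 : α < 1) (hlam0 : 0 < lam) (hlam : lam < α)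
    {b : ℝ} {c d : FPS}
    (h : ∀ γ : MIdx, ordP α lam γ < b → MvPowerSeries.coeff (R := ℝ) γ c = MvPowerSeries.coeff (R := ℝ) γ d)
    (δ : MIdx) (hδ : ordP α lam δ ≤ b) :
    MvPowerSeries.coeff (R := ℝ) δ (Dzero c) = MvPowerSeries.coeff (R := ℝ) δ (Dzero d) := by
  rw [MvPowerSeries.coeff_apply, MvPowerSeries.coeff_apply]
  simp only [Dzero]
  apply Finset.sum_congr rfl
  intro j hj
  rcases j with (_ | k) | n
  · rfl
  · have hne : δ (Sum.inl (k+1)) ≠ 0 := Finsupp.mem_support_iff.mp hj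
    have hlt := ordP_shift hα0 hα1 hlam0 hlam hne
    simp only []
    rw [h _ (lt_of_lt_of_le hlt hδ)]
  · rfl

lemma Dzero_iter_congr {α lam : ℝ} (hα0 : 0 < α) (hα1 : α < 1) (hlam0 : 0 < lam)
    (hlam : lam < α) {b : ℝ} {c d : FPS}
    (h : ∀ γ : MIdx, ordP α lam γ < b → MvPowerSeries.coeff (R := ℝ) γ c = MvPowerSeries.coeff (R := ℝ) γ d)
    (l : ℕ) (δ : MIdx) (hδ : ordP α lam δ ≤ b) :
    MvPowerSeries.coeff (R := ℝ) δ (Dzero^[l+1] c) = MvPowerSeries.coeff (R := ℝ) δ (Dzero^[l+1] d) := by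
  induction l generalizing δ with
  | zero => exact Dzero_congr hα0 hα1 hlam0 hlam h δ hδ
  | succ l ih =>
      rw [Function.iterate_succ_apply', Function.iterate_succ_apply' (f := Dzero) (n := l+1)]
      exact Dzero_congr hα0 hα1 hlam0 hlam (fun γ hγ => ih γ hγ.le) δ hδ

lemma Dzero_coeff_zero (x : FPS) : MvPowerSeries.coeff (R := ℝ) (0 : MIdx) (Dzero x) = 0 := by
  rw [MvPowerSeries.coeff_apply]
  simp only [Dzero, Finsupp.support_zero, Finset.sum_empty]

lemma Dzero_iter_coeff_zero (x : FPS) (l : ℕ) :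
    MvPowerSeries.coeff (R := ℝ) (0 : MIdx) (Dzero^[l+1] x) = 0 := by
  rw [Function.iterate_succ_apply']
  exact Dzero_coeff_zero _

def Wt (δ : MIdx) : ℕ :=
  δ.sum fun j m => (match j with | Sum.inl k => k | Sum.inr _ => 0) * m

lemma Wt_add (x y : MIdx) : Wt (x + y) = Wt x + Wt y := by
  unfold Wt
  apply Finsupp.sum_add_index' (fun j => by simp) (fun j m n => by ring)

lemma Wt_single_inl (k : ℕ) : Wt (Finsupp.single (Sum.inl k : Var) 1) = k := by
  unfold Wt
  rw [Finsupp.sum_single_index] <;> simp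

lemma Wt_mono {γ β : MIdx} (h : γ ≤ β) : Wt γ ≤ Wt β := by
  have heq : γ + (β - γ) = β := add_tsub_cancel_of_le h
  calc Wt γ ≤ Wt γ + Wt (β - γ) := Nat.le_add_right _ _
  _ = Wt β := by rw [← Wt_add, heq]

lemma Wt_shift {δ : MIdx} {k : ℕ} (h : δ (Sum.inl (k+1)) ≠ 0) :
    Wt (δ + Finsupp.single (Sum.inl k) 1 - Finsupp.single (Sum.inl (k+1)) 1) + (k+1)
      = Wt δ + k := by
  have hle : Finsupp.single (Sum.inl (k+1) : Var) 1 ≤ δ + Finsupp.single (Sum.inl k) 1 := by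
    rw [Finsupp.single_le_iff, Finsupp.add_apply]
    omega
  have heq : (δ + Finsupp.single (Sum.inl k) 1 - Finsupp.single (Sum.inl (k+1)) 1)
      + Finsupp.single (Sum.inl (k+1)) 1 = δ + Finsupp.single (Sum.inl k) 1 :=
    tsub_add_cancel_of_le hle
  have hw := congrArg Wt heq
  rw [Wt_add, Wt_add, Wt_single_inl, Wt_single_inl] at hw
  omega

lemma Dzero_iter_vanish (x : FPS) : ∀ (l : ℕ) (δ : MIdx), Wt δ < l →
    MvPowerSeries.coeff (R := ℝ) δ (Dzero^[l] x) = 0 := by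
  intro l
  induction l with
  | zero => intro δ h; omega
  | succ l ih =>
      intro δ h
      rw [Function.iterate_succ_apply', MvPowerSeries.coeff_apply]
      simp only [Dzero]
      apply Finset.sum_eq_zero
      intro j hj
      rcases j with (_ | k) | n
      · rfl
      · have hne : δ (Sum.inl (k+1)) ≠ 0 := Finsupp.mem_support_iff.mp hj
        have hw := Wt_shift hne
        simp only []
        rw [ih _ (by omega), mul_zero]
      · rfl

lemma coeff_zkmul_congr {β : MIdx} {t s : FPS} (h : Agree β t s) (k : ℕ) :
    MvPowerSeries.coeff (R := ℝ) β (zk k * t) = MvPowerSeries.coeff (R := ℝ) β (zk k * s) := by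
  classical
  rw [MvPowerSeries.coeff_mul, MvPowerSeries.coeff_mul]
  apply Finset.sum_congr rfl
  intro p hp
  rw [Finset.HasAntidiagonal.mem_antidiagonal] at hp
  rcases eq_or_ne p.1 (Finsupp.single (Sum.inl k : Var) 1) with he | he
  · have h2ne : p.2 ≠ β := by
      intro h2
      rw [h2] at hp
      have h0 : p.1 = 0 := add_eq_right.mp hp
      rw [he] at h0
      exact one_ne_zero (Finsupp.single_eq_zero.mp h0)
    have h2le : p.2 ≤ β := hp ▸ self_le_add_left p.2 p.1
    rw [h _ h2le h2ne]
  · rw [zk, MvPowerSeries.coeff_X, if_neg he, zero_mul, zero_mul]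

lemma coeff_powD_congr {α lam : ℝ} (hα0 : 0 < α) (hα1 : α < 1) (hlam0 : 0 < lam)
    (hlam : lam < α) {β : MIdx} {π ρ c d : FPS} (hπ : Agree β π ρ)
    (h3 : ∀ γ : MIdx, ordP α lam γ < ordP α lam β →
      MvPowerSeries.coeff (R := ℝ) γ c = MvPowerSeries.coeff (R := ℝ) γ d) (l : ℕ) :
    MvPowerSeries.coeff (R := ℝ) β (π ^ (l+1) * Dzero^[l+1] c)
      = MvPowerSeries.coeff (R := ℝ) β (ρ ^ (l+1) * Dzero^[l+1] d) := by
  classical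
  rw [MvPowerSeries.coeff_mul, MvPowerSeries.coeff_mul]
  apply Finset.sum_congr rfl
  intro p hp
  rw [Finset.HasAntidiagonal.mem_antidiagonal] at hp
  rcases eq_or_ne p.1 β with he | he
  · have h2 : p.2 = 0 := by
      rw [he] at hp
      exact add_eq_left.mp hp
    rw [h2, Dzero_iter_coeff_zero, Dzero_iter_coeff_zero, mul_zero, mul_zero]
  · have h1le : p.1 ≤ β := hp ▸ self_le_add_right p.1 p.2
    have h2le : p.2 ≤ β := hp ▸ self_le_add_left p.2 p.1
    rw [(hπ.pow (l+1)) p.1 h1le he]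
    congr 1
    refine Dzero_iter_congr hα0 hα1 hlam0 hlam h3 l p.2 ?_
    rcases eq_or_ne p.2 β with h2e | h2e
    · rw [h2e]
    · exact (ordP_lt_of_le_ne hα0 hα1 hlam0 h2le h2e).le

lemma coeff_powD_vanish (π c : FPS) (β : MIdx) (l : ℕ) (h : Wt β < l) :
    MvPowerSeries.coeff (R := ℝ) β (π ^ l * Dzero^[l] c) = 0 := by
  classical
  rw [MvPowerSeries.coeff_mul]
  apply Finset.sum_eq_zero
  intro p hp
  rw [Finset.HasAntidiagonal.mem_antidiagonal] at hp
  have h2 : Wt p.2 ≤ Wt β := Wt_mono (hp ▸ self_le_add_left p.2 p.1)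
  rw [Dzero_iter_vanish _ _ _ (by omega), mul_zero]

/-- Triangular dependence of `π⁻` with respect to the ordering `≺` (property (ks05)):
if `(π, π'', c)` and `(ρ, ρ'', d)` agree on all components indexed by multi-indices
`γ ≺ β`, then the `β`-components of `π⁻` apart from the explicit counterterm agree. -/
theorem stmt_11 (α lam : ℝ) (hα0 : 0 < α) (hα1 : α < 1) (hlam0 : 0 < lam) (hlam : lam < α)
    (β : MIdx) (ξ : ℝ) (π π'' ρ ρ'' c d : FPS) (hc : OnlyZk c) (hd : OnlyZk d)
    (h1 : ∀ γ : MIdx, ordP α lam γ < ordP α lam β →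
      MvPowerSeries.coeff (R := ℝ) γ π = MvPowerSeries.coeff (R := ℝ) γ ρ)
    (h2 : ∀ γ : MIdx, ordP α lam γ < ordP α lam β →
      MvPowerSeries.coeff (R := ℝ) γ π'' = MvPowerSeries.coeff (R := ℝ) γ ρ'')
    (h3 : ∀ γ : MIdx, ordP α lam γ < ordP α lam β →
      MvPowerSeries.coeff (R := ℝ) γ c = MvPowerSeries.coeff (R := ℝ) γ d) :
    MvPowerSeries.coeff (R := ℝ) β (piminus π π'' c ξ) + MvPowerSeries.coeff (R := ℝ) β c
      = MvPowerSeries.coeff (R := ℝ) β (piminus ρ ρ'' d ξ) + MvPowerSeries.coeff (R := ℝ) β d := by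
  classical
  have hπ : Agree β π ρ := fun γ hle hne => h1 γ (ordP_lt_of_le_ne hα0 hα1 hlam0 hle hne)
  have hπ'' : Agree β π'' ρ'' := fun γ hle hne => h2 γ (ordP_lt_of_le_ne hα0 hα1 hlam0 hle hne)
  rw [show (MvPowerSeries.coeff (R := ℝ) β) (piminus π π'' c ξ) = piminus π π'' c ξ β from rfl,
      show (MvPowerSeries.coeff (R := ℝ) β) (piminus ρ ρ'' d ξ) = piminus ρ ρ'' d ξ β from rfl]
  simp only [piminus]
  have hT1 : (∑ᶠ k : ℕ, MvPowerSeries.coeff (R := ℝ) β (zk k * π ^ k * π''))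
      = ∑ᶠ k : ℕ, MvPowerSeries.coeff (R := ℝ) β (zk k * ρ ^ k * ρ'') := by
    apply finsum_congr
    intro k
    rw [mul_assoc, mul_assoc]
    exact coeff_zkmul_congr ((hπ.pow k).mul hπ'') k
  set Ac : ℕ → ℝ := fun l => ((l.factorial : ℝ))⁻¹ * MvPowerSeries.coeff (R := ℝ) β (π ^ l * Dzero^[l] c)
    with hAc
  set Ad : ℕ → ℝ := fun l => ((l.factorial : ℝ))⁻¹ * MvPowerSeries.coeff (R := ℝ) β (ρ ^ l * Dzero^[l] d)
    with hAd
  have hsupc : Function.support Ac ⊆ (Finset.range (Wt β + 1) : Finset ℕ) := by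
    intro l hl
    simp only [Function.mem_support, hAc] at hl
    by_contra hmem
    simp only [Finset.coe_range, Set.mem_Iio, not_lt] at hmem
    exact hl (by rw [coeff_powD_vanish _ _ _ _ (by omega), mul_zero])
  have hsupd : Function.support Ad ⊆ (Finset.range (Wt β + 1) : Finset ℕ) := by
    intro l hl
    simp only [Function.mem_support, hAd] at hl
    by_contra hmem
    simp only [Finset.coe_range, Set.mem_Iio, not_lt] at hmem
    exact hl (by rw [coeff_powD_vanish _ _ _ _ (by omega), mul_zero])
  have hec : ∑ᶠ l, Ac l = ∑ l ∈ Finset.range (Wt β + 1), Ac l :=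
    finsum_eq_finset_sum_of_support_subset _ hsupc
  have hed : ∑ᶠ l, Ad l = ∑ l ∈ Finset.range (Wt β + 1), Ad l :=
    finsum_eq_finset_sum_of_support_subset _ hsupd
  have hshift : ∑ i ∈ Finset.range (Wt β), Ac (i+1) = ∑ i ∈ Finset.range (Wt β), Ad (i+1) := by
    apply Finset.sum_congr rfl
    intro i _
    simp only [hAc, hAd]
    rw [coeff_powD_congr hα0 hα1 hlam0 hlam hπ h3 i]
  have h0c : Ac 0 = MvPowerSeries.coeff (R := ℝ) β c := by
    simp [hAc]
  have h0d : Ad 0 = MvPowerSeries.coeff (R := ℝ) β d := by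
    simp [hAd]
  rw [hT1, hec, hed, Finset.sum_range_succ' Ac, Finset.sum_range_succ' Ad, hshift, h0c, h0d]
  ring
end
end

section
/- Exponential formula on the subalgebra ℝ[[z_k]] (second item of (cw27)/(cw35)): Let q ∈ ℝ[[z_k,z_n]] and let Γ* be any row-finite unital algebra endomorphism of ℝ[[z_k,z_n]] (i.e. a linear map induced componentwise by a matrix ((Γ*)_β^γ) with, for each β, only finitely many γ such that (Γ*)_β^γ ≠ 0, which is multiplicative and fixes 𝟙) satisfying Γ* z_k = Σ_{l≥0} (k+l choose k) q^l z_{k+l} for every k ∈ ℕ. Then for every c ∈ ℝ[[z_k]], the sum Σ_{l≥0} (1/l!) q^l (D⁽⁰⁾)^l c is componentwise finite and Γ* c = Σ_{l≥0} (1/l!) q^l (D⁽⁰⁾)^l c. -/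
open MvPowerSeries

noncomputable section

/-- Row-finiteness of a matrix indexed by pairs of multi-indices. -/
def RowFinite (Γ : MIdx → MIdx → ℝ) : Prop := ∀ β : MIdx, {γ : MIdx | Γ β γ ≠ 0}.Finite

/-- The linear map induced componentwise by a (row-finite) matrix. -/
def applyG (Γ : MIdx → MIdx → ℝ) (π : FPS) : FPS := fun β =>
  ∑ᶠ γ : MIdx, Γ β γ * MvPowerSeries.coeff (R := ℝ) γ π

/-- The prescribed image of `z_k`: `Σ_{l≥0} (k+l choose k) q^l z_{k+l}`, defined
componentwise (only finitely many `l` contribute to each component). -/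
def gammaZk (q : FPS) (k : ℕ) : FPS := fun β =>
  ∑ᶠ l : ℕ, (((k + l).choose k : ℝ)) * MvPowerSeries.coeff (R := ℝ) β (q ^ l * zk (k + l))

/-- The population condition `π⁽ⁿ⁾_β = 0 unless |n| < |β|`. -/
def PopCond (α : ℝ) (pin : ℕ × ℕ → FPS) : Prop :=
  ∀ (n : ℕ × ℕ) (β : MIdx),
    MvPowerSeries.coeff (R := ℝ) β (pin n) ≠ 0 → ((n.1 : ℝ) + 2 * n.2) < hom α β

/-- `Γ` is the re-expansion matrix associated to the family `{π⁽ⁿ⁾}_{n ∈ ℕ²}`: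
row-finite, the induced map is a unital algebra endomorphism, and it maps the
coordinates `z_k`, `z_n` as prescribed. -/
def IsReExpansion (pin : ℕ × ℕ → FPS) (Γ : MIdx → MIdx → ℝ) : Prop :=
  RowFinite Γ ∧
  (∀ π π' : FPS, applyG Γ (π * π') = applyG Γ π * applyG Γ π') ∧
  applyG Γ 1 = 1 ∧
  (∀ k : ℕ, applyG Γ (zk k) = gammaZk (pin (0, 0)) k) ∧
  (∀ n : Pos2, applyG Γ (zn n) = zn n + pin n.val)

namespace Stmt17Aux

open Finsupp MvPowerSeries Finset

/-- `e_k` -/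
def ek (k : ℕ) : MIdx := Finsupp.single (Sum.inl k) 1

/-- weight `N β = Σ_k k β(k)` -/
def Nw (β : MIdx) : ℕ := β.sum fun j m => (match j with | Sum.inl k => k | Sum.inr _ => 0) * m

lemma Nw_add (β γ : MIdx) : Nw (β + γ) = Nw β + Nw γ := by
  classical
  unfold Nw
  apply Finsupp.sum_add_index'
  · intro j; simp
  · intro j m n; exact Nat.mul_add _ _ _

lemma Nw_ek (k : ℕ) : Nw (ek k) = k := by
  unfold Nw ek
  rw [Finsupp.sum_single_index] <;> simp

lemma Nw_le_of_le {δ β : MIdx} (h : δ ≤ β) : Nw δ ≤ Nw β := by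
  obtain ⟨c, rfl⟩ := exists_add_of_le h
  rw [Nw_add]; omega

lemma shift_cancel {β : MIdx} {k : ℕ} (h : β (Sum.inl (k + 1)) ≠ 0) :
    (β + ek k - ek (k + 1)) + ek (k + 1) = β + ek k := by
  apply tsub_add_cancel_of_le
  have : ek (k + 1) ≤ β := by
    rw [ek, Finsupp.single_le_iff]; omega
  exact le_trans this le_self_add

lemma Nw_shift {β : MIdx} {k : ℕ} (h : β (Sum.inl (k + 1)) ≠ 0) :
    Nw (β + ek k - ek (k + 1)) + (k + 1) = Nw β + k := by
  have := congrArg Nw (shift_cancel h)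
  rw [Nw_add, Nw_add, Nw_ek, Nw_ek] at this
  omega

/-- The `k`-th term of the coefficient formula for `Dzero`. -/
def Dterm (β : MIdx) (k : ℕ) (π : FPS) : ℝ :=
  if β (Sum.inl (k + 1)) = 0 then 0 else
    ((k : ℝ) + 1) * ((β (Sum.inl k) : ℝ) + 1) *
      MvPowerSeries.coeff (R := ℝ) (β + ek k - ek (k + 1)) π

/-- A bound for the support of `β` on the `inl`-variables. -/
def Mb (β : MIdx) : ℕ :=
  (β.support.sup fun j => match j with | Sum.inl k => k | Sum.inr _ => 0) + 1

lemma Mb_spec (β : MIdx) : ∀ j, Mb β ≤ j → β (Sum.inl j) = 0 := by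
  intro j hj
  by_contra h
  have hmem : (Sum.inl j : Var) ∈ β.support := Finsupp.mem_support_iff.mpr h
  have h2 : j ≤ β.support.sup fun j : Var => match j with | Sum.inl k => k | Sum.inr _ => 0 := by
    simpa using Finset.le_sup (f := fun j : Var => match j with | Sum.inl k => k | Sum.inr _ => 0) hmem
  simp only [Mb] at hj
  omega

lemma Mb_mono {δ β : MIdx} (h : δ ≤ β) : ∀ j, Mb β ≤ j → δ (Sum.inl j) = 0 := by
  intro j hj
  have := Mb_spec β j hj
  have := h (Sum.inl j)
  omega

lemma coeff_Dzero (β : MIdx) (π : FPS) {M : ℕ} (hM : ∀ j, M ≤ j → β (Sum.inl j) = 0) :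
    MvPowerSeries.coeff (R := ℝ) β (Dzero π) = ∑ k ∈ Finset.range M, Dterm β k π := by
  classical
  rw [MvPowerSeries.coeff_apply]
  simp only [Dzero]
  set G : Var → ℝ := fun j =>
    (match j with
     | Sum.inl (k + 1) => Dterm β k π
     | _ => 0) with hG
  have step1 : (∑ j ∈ β.support,
      (match j with
       | Sum.inl (k + 1) =>
           ((k : ℝ) + 1) * ((β (Sum.inl k) : ℝ) + 1) *
             MvPowerSeries.coeff (R := ℝ)
               (β + Finsupp.single (Sum.inl k) 1 - Finsupp.single (Sum.inl (k + 1)) 1) π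
       | _ => 0)) = ∑ j ∈ β.support, G j := by
    apply Finset.sum_congr rfl
    intro j hj
    have hj' : β j ≠ 0 := Finsupp.mem_support_iff.mp hj
    rcases j with k | n
    · match k with
      | 0 => rfl
      | k + 1 =>
        simp only [hG, Dterm, if_neg hj', ek]
    · rfl
  rw [step1]
  set T : Finset Var := (Finset.range M).image fun k => (Sum.inl (k + 1) : Var) with hT
  have step2 : ∑ j ∈ β.support, G j = ∑ j ∈ β.support ∪ T, G j := by
    apply Finset.sum_subset Finset.subset_union_left
    intro j _ hj
    rcases j with k | n
    · match k with
      | 0 => rfl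
      | k + 1 =>
        have hk : β (Sum.inl (k + 1)) = 0 := by
          by_contra h
          exact hj (Finsupp.mem_support_iff.mpr h)
        simp only [hG, Dterm, if_pos hk]
    · rfl
  have step3 : ∑ j ∈ β.support ∪ T, G j = ∑ j ∈ T, G j := by
    refine (Finset.sum_subset Finset.subset_union_right ?_).symm
    intro j hj hjT
    rcases j with k | n
    · match k with
      | 0 => rfl
      | k + 1 =>
        rcases Finset.mem_union.mp hj with hj1 | hj2
        · have hk : β (Sum.inl (k + 1)) ≠ 0 := Finsupp.mem_support_iff.mp hj1
          have : k + 1 < M := by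
            by_contra hc
            exact hk (hM (k + 1) (by omega))
          exact absurd (Finset.mem_image.mpr ⟨k, Finset.mem_range.mpr (by omega), rfl⟩) hjT
        · exact absurd hj2 hjT
    · rfl
  rw [step2, step3, hT]
  rw [Finset.sum_image (by intro a _ b _ h; simpa using h)]

lemma Dterm_add (β : MIdx) (k : ℕ) (π π' : FPS) :
    Dterm β k (π + π') = Dterm β k π + Dterm β k π' := by
  unfold Dterm; split_ifs with h
  · ring
  · rw [map_add]; ring

lemma Dterm_smul (β : MIdx) (k : ℕ) (r : ℝ) (π : FPS) :
    Dterm β k (r • π) = r * Dterm β k π := by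
  unfold Dterm; split_ifs with h
  · ring
  · rw [map_smul, smul_eq_mul]; ring

lemma Dterm_zero (β : MIdx) (k : ℕ) : Dterm β k (0 : FPS) = 0 := by
  unfold Dterm; split_ifs with h
  · rfl
  · rw [map_zero]; ring

lemma Dzero_add (π π' : FPS) : Dzero (π + π') = Dzero π + Dzero π' := by
  apply MvPowerSeries.ext; intro β
  rw [map_add, coeff_Dzero β _ (Mb_spec β), coeff_Dzero β _ (Mb_spec β),
    coeff_Dzero β _ (Mb_spec β), ← Finset.sum_add_distrib]
  exact Finset.sum_congr rfl fun k _ => Dterm_add β k π π'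

lemma Dzero_smul (r : ℝ) (π : FPS) : Dzero (r • π) = r • Dzero π := by
  apply MvPowerSeries.ext; intro β
  rw [map_smul, smul_eq_mul, coeff_Dzero β _ (Mb_spec β), coeff_Dzero β _ (Mb_spec β),
    Finset.mul_sum]
  exact Finset.sum_congr rfl fun k _ => Dterm_smul β k r π

lemma Dzero_zero : Dzero (0 : FPS) = 0 := by
  apply MvPowerSeries.ext; intro β
  rw [map_zero, coeff_Dzero β _ (Mb_spec β)]
  exact Finset.sum_eq_zero fun k _ => Dterm_zero β k

lemma coeff_iterate_Dzero_eq_zero :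
    ∀ (l : ℕ) (β : MIdx) (π : FPS), Nw β < l →
      MvPowerSeries.coeff (R := ℝ) β (Dzero^[l] π) = 0 := by
  intro l
  induction l with
  | zero => intro β π h; omega
  | succ l ih =>
    intro β π h
    rw [Function.iterate_succ_apply', coeff_Dzero β _ (Mb_spec β)]
    apply Finset.sum_eq_zero
    intro k _
    unfold Dterm
    split_ifs with hk
    · rfl
    · have hsh := Nw_shift (β := β) (k := k) hk
      rw [ih _ _ (by omega), mul_zero]

lemma coeff_q_pow_mul_eq_zero (q : FPS) {β : MIdx} {l : ℕ} (h : Nw β < l) (π : FPS) :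
    MvPowerSeries.coeff (R := ℝ) β (q ^ l * Dzero^[l] π) = 0 := by
  classical
  rw [MvPowerSeries.coeff_mul]
  apply Finset.sum_eq_zero
  intro p hp
  have hp' : p.1 + p.2 = β := Finset.HasAntidiagonal.mem_antidiagonal.mp hp
  have h2 : Nw p.2 ≤ Nw β := by
    rw [← hp', Nw_add]; omega
  rw [coeff_iterate_Dzero_eq_zero l p.2 π (by omega), mul_zero]

lemma coeff_mul_zk (π : FPS) (β : MIdx) (k : ℕ) :
    MvPowerSeries.coeff (R := ℝ) β (π * zk k) =
      if β (Sum.inl k) = 0 then 0 else MvPowerSeries.coeff (R := ℝ) (β - ek k) π := by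
  classical
  rw [zk, MvPowerSeries.X_def, MvPowerSeries.coeff_mul_monomial]
  simp only [mul_one]
  rcases Nat.eq_zero_or_pos (β (Sum.inl k)) with h | h
  · rw [if_neg (by rw [Finsupp.single_le_iff]; omega), if_pos h]
  · rw [if_pos (by rw [Finsupp.single_le_iff]; omega), if_neg (by omega), ek]

lemma coeff_one' (β : MIdx) : MvPowerSeries.coeff (R := ℝ) β (1 : FPS) = if β = 0 then 1 else 0 := by
  classical
  exact MvPowerSeries.coeff_one _

lemma apply_sub (β : MIdx) (k j : ℕ) :
    (β - ek k) (Sum.inl j) = β (Sum.inl j) - (if j = k then 1 else 0) := by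
  simp only [ek, Finsupp.tsub_apply, Finsupp.single_apply, Sum.inl.injEq]
  split_ifs with h1 h2 h2 <;> omega

lemma apply_shift (β : MIdx) (s j : ℕ) :
    (β + ek s - ek (s + 1)) (Sum.inl j) =
      β (Sum.inl j) + (if j = s then 1 else 0) - (if j = s + 1 then 1 else 0) := by
  simp only [ek, Finsupp.tsub_apply, Finsupp.add_apply, Finsupp.single_apply, Sum.inl.injEq]
  split_ifs with h1 h2 h2 <;> omega

lemma Dzero_one : Dzero (1 : FPS) = 0 := by
  apply MvPowerSeries.ext; intro β
  rw [map_zero, coeff_Dzero β _ (Mb_spec β)]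
  apply Finset.sum_eq_zero
  intro s _
  unfold Dterm
  split_ifs with h
  · rfl
  · rw [coeff_one', if_neg, mul_zero]
    intro hc
    have h2 := apply_shift β s s
    rw [hc, if_pos rfl, if_neg (by omega)] at h2
    simp only [Finsupp.coe_zero, Pi.zero_apply] at h2
    omega

lemma Dzero_mul_zk (π : FPS) (k : ℕ) :
    Dzero (π * zk k) = Dzero π * zk k + ((k : ℝ) + 1) • (π * zk (k + 1)) := by
  classical
  apply MvPowerSeries.ext; intro β
  set M : ℕ := max (Mb β) (k + 2) with hMdef
  have hM : ∀ j, M ≤ j → β (Sum.inl j) = 0 := fun j hj =>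
    Mb_spec β j (le_trans (le_max_left _ _) hj)
  have hM' : ∀ j, M ≤ j → (β - ek k) (Sum.inl j) = 0 := by
    intro j hj
    have h1 := hM j hj
    rw [apply_sub]
    omega
  set B : ℝ := ((k : ℝ) + 1) * (if β (Sum.inl (k + 1)) = 0 then 0
      else MvPowerSeries.coeff (R := ℝ) (β - ek (k + 1)) π) with hB
  have key : ∀ s ∈ Finset.range M, Dterm β s (π * zk k) =
      (if β (Sum.inl k) = 0 then 0 else Dterm (β - ek k) s π) +
      (if s = k then B else 0) := by
    intro s _
    unfold Dterm
    by_cases h1 : β (Sum.inl (s + 1)) = 0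
    · rw [if_pos h1]
      have hg : (β - ek k) (Sum.inl (s + 1)) = 0 := by rw [apply_sub]; omega
      rw [if_pos hg]
      have hsk : (if s = k then B else 0) = 0 := by
        split_ifs with hs
        · subst hs; rw [hB, if_pos h1, mul_zero]
        · rfl
      rw [hsk]; split_ifs <;> ring
    · rw [if_neg h1, coeff_mul_zk]
      have hgj : ∀ j, (β + ek s - ek (s + 1)) (Sum.inl j)
          = β (Sum.inl j) + (if j = s then 1 else 0) - (if j = s + 1 then 1 else 0) :=
        apply_shift β s
      rcases eq_or_ne s k with rfl | hsk
      · -- s = k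
        have hgk := hgj s
        rw [if_pos rfl, if_neg (by omega)] at hgk
        rw [if_neg (by rw [hgk]; omega)]
        have hidx : β + ek s - ek (s + 1) - ek s = β - ek (s + 1) := by
          ext j
          rcases j with i | n
          · rw [apply_sub, apply_sub]
            have := hgj i
            simp only [ek, Finsupp.tsub_apply, Finsupp.add_apply, Finsupp.single_apply,
              Sum.inl.injEq] at this ⊢
            split_ifs at * <;> omega
          · simp [ek, Finsupp.single_apply]
        rw [hidx, if_pos rfl, hB, if_neg h1]
        by_cases h0 : β (Sum.inl s) = 0
        · rw [if_pos h0, h0]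
          push_cast
          ring
        · rw [if_neg h0]
          have hgk2 : (β - ek s) (Sum.inl (s + 1)) = β (Sum.inl (s + 1)) := by
            rw [apply_sub, if_neg (by omega)]; omega
          rw [hgk2, if_neg h1]
          have hgk3 : (β - ek s) (Sum.inl s) = β (Sum.inl s) - 1 := by
            rw [apply_sub, if_pos rfl]
          have hidx2 : β - ek s + ek s - ek (s + 1) = β - ek (s + 1) := by
            have hle : ek s ≤ β := by rw [ek, Finsupp.single_le_iff]; omega
            rw [tsub_add_cancel_of_le hle]
          rw [hidx2, hgk3]
          have hcast : ((β (Sum.inl s) - 1 : ℕ) : ℝ) = (β (Sum.inl s) : ℝ) - 1 := by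
            have h2 : 1 ≤ β (Sum.inl s) := by omega
            push_cast [h2]
            ring
          rw [hcast]
          ring
      · -- s ≠ k
        rw [if_neg hsk, add_zero]
        rcases eq_or_ne (s + 1) k with hs1k | hs1k
        · -- s + 1 = k
          subst hs1k
          have hgk := hgj (s + 1)
          rw [if_neg (by omega), if_pos rfl] at hgk
          by_cases h2 : β (Sum.inl (s + 1)) = 1
          · -- degenerate: both sides vanish
            rw [if_pos (by rw [hgk]; omega)]
            have hgg2 : (β - ek (s + 1)) (Sum.inl (s + 1)) = 0 := by
              rw [apply_sub, if_pos rfl]; omega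
            rw [if_neg h1, if_pos hgg2, mul_zero]
          · rw [if_neg (by rw [hgk]; omega), if_neg h1]
            have hgg2 : (β - ek (s + 1)) (Sum.inl (s + 1)) = β (Sum.inl (s + 1)) - 1 := by
              rw [apply_sub, if_pos rfl]
            rw [hgg2, if_neg (by omega)]
            have hgs : (β - ek (s + 1)) (Sum.inl s) = β (Sum.inl s) := by
              rw [apply_sub, if_neg (by omega)]; omega
            have hidx : β + ek s - ek (s + 1) - ek (s + 1)
                = β - ek (s + 1) + ek s - ek (s + 1) := by
              ext j
              rcases j with i | n
              · simp only [ek, Finsupp.tsub_apply, Finsupp.add_apply, Finsupp.single_apply,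
                  Sum.inl.injEq]
                split_ifs <;> omega
              · simp [ek, Finsupp.single_apply]
            rw [hidx, hgs]
        · -- s ≠ k, s + 1 ≠ k
          have hgk := hgj k
          rw [if_neg (by omega), if_neg (by omega)] at hgk
          by_cases h0 : β (Sum.inl k) = 0
          · rw [if_pos (by rw [hgk]; omega), if_pos h0]
            ring
          · rw [if_neg (by rw [hgk]; omega), if_neg h0]
            have hgg : (β - ek k) (Sum.inl (s + 1)) = β (Sum.inl (s + 1)) := by
              rw [apply_sub, if_neg (by omega)]; omega
            rw [hgg, if_neg h1]
            have hgs : (β - ek k) (Sum.inl s) = β (Sum.inl s) := by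
              rw [apply_sub, if_neg (by omega)]; omega
            have hidx : β + ek s - ek (s + 1) - ek k = β - ek k + ek s - ek (s + 1) := by
              ext j
              rcases j with i | n
              · simp only [ek, Finsupp.tsub_apply, Finsupp.add_apply, Finsupp.single_apply,
                  Sum.inl.injEq]
                split_ifs <;> omega
              · simp [ek, Finsupp.single_apply]
            rw [hidx, hgs]
  -- assemble
  rw [coeff_Dzero β _ hM, Finset.sum_congr rfl key, Finset.sum_add_distrib,
    Finset.sum_ite_eq' (Finset.range M) k fun _ => B,
    if_pos (Finset.mem_range.mpr (by omega))]
  rw [map_add, map_smul, smul_eq_mul, coeff_mul_zk, coeff_mul_zk]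
  congr 1
  split_ifs with h0
  · exact Finset.sum_const_zero
  · exact (coeff_Dzero _ _ hM').symm

lemma Dzero_sum {ι : Type*} (s : Finset ι) (f : ι → FPS) :
    Dzero (∑ i ∈ s, f i) = ∑ i ∈ s, Dzero (f i) := by
  classical
  induction s using Finset.induction_on with
  | empty => simpa using Dzero_zero
  | insert _ _ h ih => rw [Finset.sum_insert h, Dzero_add, ih, Finset.sum_insert h]

lemma iterate_Dzero_zero (l : ℕ) : Dzero^[l] (0 : FPS) = 0 := by
  induction l with
  | zero => rfl
  | succ l ih => rw [Function.iterate_succ_apply, Dzero_zero, ih]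

lemma iterate_Dzero_one {j : ℕ} (hj : 1 ≤ j) : Dzero^[j] (1 : FPS) = 0 := by
  obtain ⟨m, rfl⟩ := Nat.exists_eq_add_of_le hj
  rw [add_comm, Function.iterate_add_apply, Function.iterate_one, Dzero_one, iterate_Dzero_zero]

/-- The binomial/Leibniz formula for iterates of `Dzero` applied to `π * z_k`. -/
lemma iterate_Dzero_mul_zk (π : FPS) (k l : ℕ) :
    Dzero^[l] (π * zk k) = ∑ j ∈ Finset.range (l + 1),
      (((l.choose j : ℝ)) * (((k + (l - j)).descFactorial (l - j) : ℕ) : ℝ)) •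
        (Dzero^[j] π * zk (k + (l - j))) := by
  induction l with
  | zero => simp
  | succ l ih =>
    rw [Function.iterate_succ_apply', ih, Dzero_sum]
    have hterm : ∀ j ∈ Finset.range (l + 1),
        Dzero ((((l.choose j : ℝ)) * (((k + (l - j)).descFactorial (l - j) : ℕ) : ℝ)) •
          (Dzero^[j] π * zk (k + (l - j)))) =
        (((l.choose j : ℝ)) * (((k + (l - j)).descFactorial (l - j) : ℕ) : ℝ)) •
          (Dzero^[j + 1] π * zk (k + (l - j))) +
        (((l.choose j : ℝ)) * (((k + (l - j)).descFactorial (l - j) : ℕ) : ℝ) *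
            (((k + (l - j)) : ℕ) + 1 : ℝ)) •
          (Dzero^[j] π * zk (k + (l - j) + 1)) := by
      intro j _
      rw [Dzero_smul, Dzero_mul_zk, smul_add, ← Function.iterate_succ_apply' Dzero j π,
        smul_smul]
    rw [Finset.sum_congr rfl hterm, Finset.sum_add_distrib]
    have e1 : (∑ j ∈ Finset.range (l + 1),
        (((l.choose j : ℝ)) * (((k + (l - j)).descFactorial (l - j) : ℕ) : ℝ)) •
          (Dzero^[j + 1] π * zk (k + (l - j)))) =
        ∑ j ∈ Finset.range (l + 2),
          (if j = 0 then 0 else ((l.choose (j - 1) : ℝ)) *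
            (((k + (l + 1 - j)).descFactorial (l + 1 - j) : ℕ) : ℝ)) •
            (Dzero^[j] π * zk (k + (l + 1 - j))) := by
      rw [Finset.sum_range_succ' (fun j => (if j = 0 then (0:ℝ) else ((l.choose (j - 1) : ℝ)) *
            (((k + (l + 1 - j)).descFactorial (l + 1 - j) : ℕ) : ℝ)) •
            (Dzero^[j] π * zk (k + (l + 1 - j)))) (l + 1)]
      have hz : (if (0:ℕ) = 0 then (0:ℝ) else ((l.choose (0 - 1) : ℝ)) *
            (((k + (l + 1 - 0)).descFactorial (l + 1 - 0) : ℕ) : ℝ)) •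
            (Dzero^[0] π * zk (k + (l + 1 - 0))) = 0 := by
        rw [if_pos rfl, zero_smul]
      rw [hz, add_zero]
      apply Finset.sum_congr rfl
      intro j hj
      have hj' : j < l + 1 := Finset.mem_range.mp hj
      have h1 : j + 1 - 1 = j := by omega
      have h2 : l + 1 - (j + 1) = l - j := by omega
      rw [if_neg (by omega), h1, h2]
    have e2 : (∑ j ∈ Finset.range (l + 1),
        (((l.choose j : ℝ)) * (((k + (l - j)).descFactorial (l - j) : ℕ) : ℝ) *
            (((k + (l - j)) : ℕ) + 1 : ℝ)) •
          (Dzero^[j] π * zk (k + (l - j) + 1))) =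
        ∑ j ∈ Finset.range (l + 2),
          (if j = l + 1 then 0 else ((l.choose j : ℝ)) *
            (((k + (l - j)).descFactorial (l - j) : ℕ) : ℝ) *
            (((k + (l - j)) : ℕ) + 1 : ℝ)) •
            (Dzero^[j] π * zk (k + (l + 1 - j))) := by
      rw [Finset.sum_range_succ (fun j => (if j = l + 1 then (0:ℝ) else ((l.choose j : ℝ)) *
            (((k + (l - j)).descFactorial (l - j) : ℕ) : ℝ) *
            (((k + (l - j)) : ℕ) + 1 : ℝ)) •
            (Dzero^[j] π * zk (k + (l + 1 - j)))) (l + 1)]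
      have hz : (if l + 1 = l + 1 then (0:ℝ) else ((l.choose (l+1) : ℝ)) *
            (((k + (l - (l+1))).descFactorial (l - (l+1)) : ℕ) : ℝ) *
            (((k + (l - (l+1))) : ℕ) + 1 : ℝ)) •
            (Dzero^[l+1] π * zk (k + (l + 1 - (l+1)))) = 0 := by
        rw [if_pos rfl, zero_smul]
      rw [hz, add_zero]
      apply Finset.sum_congr rfl
      intro j hj
      have hj' : j < l + 1 := Finset.mem_range.mp hj
      have h3 : k + (l + 1 - j) = k + (l - j) + 1 := by omega
      rw [if_neg (by omega), h3]
    rw [e1, e2, ← Finset.sum_add_distrib]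
    apply Finset.sum_congr rfl
    intro j hj
    have hj' : j < l + 2 := Finset.mem_range.mp hj
    rw [← add_smul]
    congr 1
    by_cases h0 : j = 0
    · subst h0
      rw [if_pos rfl, if_neg (by omega)]
      simp only [Nat.sub_zero, Nat.choose_zero_right, Nat.cast_one, one_mul, zero_add]
      have hd : (k + (l + 1)).descFactorial (l + 1) = (k + l + 1) * ((k + l).descFactorial l) := by
        have h5 : k + (l + 1) = (k + l) + 1 := by omega
        rw [h5, Nat.succ_descFactorial_succ]
      rw [hd]
      push_cast
      ring
    · by_cases h1 : j = l + 1
      · subst h1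
        rw [if_neg h0, if_pos rfl]
        simp [Nat.sub_self, Nat.choose_self, Nat.add_sub_cancel]
      · rw [if_neg h0, if_neg h1]
        have hjl : j ≤ l := by omega
        have hd : (k + (l + 1 - j)).descFactorial (l + 1 - j)
            = (k + (l - j) + 1) * ((k + (l - j)).descFactorial (l - j)) := by
          have h2 : l + 1 - j = (l - j) + 1 := by omega
          have h3 : k + ((l - j) + 1) = (k + (l - j)) + 1 := by omega
          rw [h2, h3, Nat.succ_descFactorial_succ]
        have hp : (l + 1).choose j = l.choose (j - 1) + l.choose j := by
          have h4 : j = (j - 1) + 1 := by omega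
          rw [h4, Nat.choose_succ_succ]
          congr 1
        rw [hd, hp]
        push_cast
        ring

lemma Nw_lt_imp {β : MIdx} {s : ℕ} (h : Nw β < s) : β (Sum.inl s) = 0 := by
  by_contra h0
  have hmem : (Sum.inl s : Var) ∈ β.support := Finsupp.mem_support_iff.mpr h0
  have hNw : Nw β = ∑ j ∈ β.support,
      (match j with | Sum.inl k => k | Sum.inr _ => 0) * β j := rfl
  have h1 := Finset.single_le_sum (f := fun (j : Var) =>
      (match j with | Sum.inl k => k | Sum.inr _ => 0) * β j)
    (fun i _ => Nat.zero_le _) hmem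
  simp only at h1
  have h2 : s ≤ s * β (Sum.inl s) := Nat.le_mul_of_pos_right s (by omega)
  omega

lemma iterate_Dzero_zk (k l : ℕ) :
    Dzero^[l] (zk k) = (((k + l).descFactorial l : ℕ) : ℝ) • zk (k + l) := by
  have h := iterate_Dzero_mul_zk 1 k l
  rw [one_mul] at h
  rw [h, Finset.sum_eq_single_of_mem 0 (Finset.mem_range.mpr (by omega))]
  · simp
  · intro j hj hj0
    rw [iterate_Dzero_one (by omega), zero_mul, smul_zero]

/-- The candidate for `Γ* π`: the exponential sum, componentwise a finite sum. -/
def Ef (q : FPS) (π : FPS) : FPS := fun β =>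
  ∑ l ∈ Finset.range (Nw β + 1),
    ((l.factorial : ℝ))⁻¹ * MvPowerSeries.coeff (R := ℝ) β (q ^ l * Dzero^[l] π)

lemma coeff_Ef (q π : FPS) (β : MIdx) :
    MvPowerSeries.coeff (R := ℝ) β (Ef q π) = ∑ l ∈ Finset.range (Nw β + 1),
      ((l.factorial : ℝ))⁻¹ * MvPowerSeries.coeff (R := ℝ) β (q ^ l * Dzero^[l] π) :=
  by rw [MvPowerSeries.coeff_apply]; rfl

lemma coeff_Ef' (q π : FPS) (β : MIdx) {M : ℕ} (hM : Nw β < M) :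
    MvPowerSeries.coeff (R := ℝ) β (Ef q π) = ∑ l ∈ Finset.range M,
      ((l.factorial : ℝ))⁻¹ * MvPowerSeries.coeff (R := ℝ) β (q ^ l * Dzero^[l] π) := by
  rw [coeff_Ef]
  apply Finset.sum_subset (Finset.range_subset_range.mpr (by omega))
  intro l _ hl
  have hl' : Nw β < l := by
    have := Finset.mem_range.not.mp hl
    omega
  rw [coeff_q_pow_mul_eq_zero q hl' π, mul_zero]

lemma Ef_eq_finsum (q π : FPS) (β : MIdx) :
    (∑ᶠ l : ℕ, ((l.factorial : ℝ))⁻¹ * MvPowerSeries.coeff (R := ℝ) β (q ^ l * Dzero^[l] π))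
      = MvPowerSeries.coeff (R := ℝ) β (Ef q π) := by
  rw [coeff_Ef]
  apply finsum_eq_sum_of_support_subset
  intro l hl
  simp only [Finset.coe_range, Set.mem_Iio]
  by_contra hc
  apply hl
  show ((l.factorial : ℝ))⁻¹ * MvPowerSeries.coeff (R := ℝ) β (q ^ l * Dzero^[l] π) = 0
  rw [coeff_q_pow_mul_eq_zero q (by omega) π, mul_zero]

lemma coeff_q_zk_eq_zero (q : FPS) {β : MIdx} {s : ℕ} (h : Nw β < s) (m : ℕ) :
    MvPowerSeries.coeff (R := ℝ) β (q ^ m * zk s) = 0 := by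
  classical
  rw [MvPowerSeries.coeff_mul]
  apply Finset.sum_eq_zero
  intro p hp
  have hp' : p.1 + p.2 = β := Finset.HasAntidiagonal.mem_antidiagonal.mp hp
  rw [zk, MvPowerSeries.coeff_X]
  split_ifs with he
  · exfalso
    have h1 : p.2 (Sum.inl s) = 1 := by rw [he, Finsupp.single_eq_same]
    have h2 : β (Sum.inl s) = 0 := Nw_lt_imp h
    have h3 := congrFun (congrArg (fun f : MIdx => (f : Var → ℕ)) hp') (Sum.inl s)
    simp only [Finsupp.coe_add, Pi.add_apply] at h3
    omega
  · rw [mul_zero]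

lemma coeff_gammaZk (q : FPS) (k : ℕ) (β : MIdx) {M : ℕ} (hM : Nw β < M) :
    MvPowerSeries.coeff (R := ℝ) β (gammaZk q k) = ∑ m ∈ Finset.range M,
      (((k + m).choose k : ℕ) : ℝ) * MvPowerSeries.coeff (R := ℝ) β (q ^ m * zk (k + m)) := by
  rw [MvPowerSeries.coeff_apply]
  show (∑ᶠ l : ℕ, (((k + l).choose k : ℕ) : ℝ) *
      MvPowerSeries.coeff (R := ℝ) β (q ^ l * zk (k + l))) = _
  apply finsum_eq_sum_of_support_subset
  intro m hm
  simp only [Finset.coe_range, Set.mem_Iio]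
  by_contra hc
  apply hm
  show (((k + m).choose k : ℕ) : ℝ) * MvPowerSeries.coeff (R := ℝ) β (q ^ m * zk (k + m)) = 0
  rw [coeff_q_zk_eq_zero q (by omega) m, mul_zero]

lemma coef_id_nat (k l j : ℕ) (hj : j ≤ l) :
    l.choose j * ((k + (l - j)).descFactorial (l - j)) * j.factorial
      = (k + (l - j)).choose k * l.factorial := by
  rw [Nat.descFactorial_eq_factorial_mul_choose, ← Nat.choose_symm_add,
    ← Nat.choose_mul_factorial_mul_factorial hj]
  ring

lemma coef_id (k l j : ℕ) (hj : j ≤ l) :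
    ((l.factorial : ℝ))⁻¹ * ((l.choose j : ℝ) * (((k + (l - j)).descFactorial (l - j) : ℕ) : ℝ))
      = ((j.factorial : ℝ))⁻¹ * (((k + (l - j)).choose k : ℕ) : ℝ) := by
  have h3 := coef_id_nat k l j hj
  have nz1 : (l.factorial : ℝ) ≠ 0 := by exact_mod_cast l.factorial_ne_zero
  have nz2 : (j.factorial : ℝ) ≠ 0 := by exact_mod_cast j.factorial_ne_zero
  field_simp
  exact_mod_cast h3.trans (mul_comm _ _)

lemma Ef_zk (q : FPS) (k : ℕ) : Ef q (zk k) = gammaZk q k := by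
  apply MvPowerSeries.ext; intro β
  rw [coeff_Ef, coeff_gammaZk q k β (lt_add_one _)]
  apply Finset.sum_congr rfl
  intro l _
  rw [iterate_Dzero_zk, mul_smul_comm, map_smul, smul_eq_mul]
  have h := coef_id k l 0 (Nat.zero_le l)
  simp only [Nat.sub_zero, Nat.choose_zero_right, Nat.cast_one, one_mul,
    Nat.factorial_zero, inv_one] at h
  rw [← mul_assoc, h]

/-- Triangle re-indexing with a vanishing condition. -/
lemma triangle (L : ℕ) (f : ℕ → ℕ → ℝ) (hf : ∀ j m, L ≤ j + m → f j m = 0) :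
    (∑ l ∈ Finset.range L, ∑ j ∈ Finset.range (l + 1), f j (l - j))
      = ∑ j ∈ Finset.range L, ∑ m ∈ Finset.range L, f j m := by
  classical
  rw [Finset.sum_sigma' (Finset.range L) (fun l => Finset.range (l + 1))
    (fun l j => f j (l - j))]
  rw [← Finset.sum_product' (Finset.range L) (Finset.range L) (fun j m => f j m)]
  rw [← Finset.sum_filter_add_sum_filter_not (Finset.range L ×ˢ Finset.range L)
    (fun p => p.1 + p.2 < L) (fun p => f p.1 p.2)]
  have hz : (∑ p ∈ (Finset.range L ×ˢ Finset.range L).filter (fun p => ¬ p.1 + p.2 < L),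
      f p.1 p.2) = 0 := by
    apply Finset.sum_eq_zero
    intro p hp
    have := (Finset.mem_filter.mp hp).2
    exact hf p.1 p.2 (by omega)
  rw [hz, add_zero]
  apply Finset.sum_nbij' (i := fun p : Σ _ : ℕ, ℕ => (p.2, p.1 - p.2))
    (j := fun p : ℕ × ℕ => ⟨p.1 + p.2, p.1⟩)
  · intro a ha
    simp only [Finset.mem_sigma, Finset.mem_range] at ha
    simp only [Finset.mem_filter, Finset.mem_product, Finset.mem_range]
    omega
  · intro a ha
    simp only [Finset.mem_filter, Finset.mem_product, Finset.mem_range] at ha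
    simp only [Finset.mem_sigma, Finset.mem_range]
    omega
  · intro a ha
    simp only [Finset.mem_sigma, Finset.mem_range] at ha
    have h2 : a.2 ≤ a.1 := by omega
    simp only [Sigma.ext_iff]
    constructor
    · omega
    · simp [heq_eq_eq]
  · intro a _
    simp
  · intro a ha
    simp only [Finset.mem_sigma, Finset.mem_range] at ha
    rfl

lemma coeff_q_mul_zk_eq_zero (q π : FPS) {β : MIdx} {j m s : ℕ} (hs : m ≤ s)
    (h : Nw β < j + m) :
    MvPowerSeries.coeff (R := ℝ) β (q ^ (j + m) * (Dzero^[j] π * zk s)) = 0 := by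
  classical
  rw [MvPowerSeries.coeff_mul]
  apply Finset.sum_eq_zero
  intro p hp
  have hp' : p.1 + p.2 = β := Finset.HasAntidiagonal.mem_antidiagonal.mp hp
  rw [coeff_mul_zk]
  split_ifs with h2
  · rw [mul_zero]
  · have hle : ek s ≤ p.2 := by rw [ek, Finsupp.single_le_iff]; omega
    have hc := congrArg Nw (tsub_add_cancel_of_le hle)
    rw [Nw_add, Nw_ek] at hc
    have h3 : Nw p.2 ≤ Nw β := by rw [← hp', Nw_add]; omega
    rw [coeff_iterate_Dzero_eq_zero j _ π (by omega), mul_zero]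

lemma Ef_mul_zk (q π : FPS) (k : ℕ) : Ef q (π * zk k) = Ef q π * gammaZk q k := by
  classical
  apply MvPowerSeries.ext; intro β
  set L : ℕ := Nw β + 1 with hL
  set g : ℕ → ℕ → ℝ := fun j m => ((j.factorial : ℝ))⁻¹ * ((((k + m).choose k : ℕ) : ℝ) *
    MvPowerSeries.coeff (R := ℝ) β (q ^ (j + m) * (Dzero^[j] π * zk (k + m)))) with hg
  have hgv : ∀ j m, L ≤ j + m → g j m = 0 := by
    intro j m h
    rw [hg]
    show ((j.factorial : ℝ))⁻¹ * ((((k + m).choose k : ℕ) : ℝ) *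
      MvPowerSeries.coeff (R := ℝ) β (q ^ (j + m) * (Dzero^[j] π * zk (k + m)))) = 0
    rw [coeff_q_mul_zk_eq_zero q π (by omega) (by omega), mul_zero, mul_zero]
  have hLHS : MvPowerSeries.coeff (R := ℝ) β (Ef q (π * zk k))
      = ∑ l ∈ Finset.range L, ∑ j ∈ Finset.range (l + 1), g j (l - j) := by
    rw [coeff_Ef]
    apply Finset.sum_congr rfl
    intro l _
    rw [iterate_Dzero_mul_zk, Finset.mul_sum, map_sum, Finset.mul_sum]
    apply Finset.sum_congr rfl
    intro j hj
    have hj' : j ≤ l := by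
      have := Finset.mem_range.mp hj
      omega
    rw [mul_smul_comm, map_smul, smul_eq_mul, hg]
    show ((l.factorial : ℝ))⁻¹ * ((l.choose j : ℝ) *
        (((k + (l - j)).descFactorial (l - j) : ℕ) : ℝ) *
        MvPowerSeries.coeff (R := ℝ) β (q ^ l * (Dzero^[j] π * zk (k + (l - j)))))
      = ((j.factorial : ℝ))⁻¹ * ((((k + (l - j)).choose k : ℕ) : ℝ) *
        MvPowerSeries.coeff (R := ℝ) β (q ^ (j + (l - j)) * (Dzero^[j] π * zk (k + (l - j)))))
    rw [show j + (l - j) = l by omega]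
    have hco := coef_id k l j hj'
    linear_combination (MvPowerSeries.coeff (R := ℝ) β (q ^ l * (Dzero^[j] π * zk (k + (l - j))))) * hco
  have hRHS : MvPowerSeries.coeff (R := ℝ) β (Ef q π * gammaZk q k)
      = ∑ j ∈ Finset.range L, ∑ m ∈ Finset.range L, g j m := by
    rw [MvPowerSeries.coeff_mul]
    have hsum : ∀ p ∈ Finset.HasAntidiagonal.antidiagonal β,
        MvPowerSeries.coeff (R := ℝ) p.1 (Ef q π) * MvPowerSeries.coeff (R := ℝ) p.2 (gammaZk q k)
          = ∑ j ∈ Finset.range L, ∑ m ∈ Finset.range L,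
              (((j.factorial : ℝ))⁻¹ * MvPowerSeries.coeff (R := ℝ) p.1 (q ^ j * Dzero^[j] π)) *
              ((((k + m).choose k : ℕ) : ℝ) *
                MvPowerSeries.coeff (R := ℝ) p.2 (q ^ m * zk (k + m))) := by
      intro p hp
      have hp' : p.1 + p.2 = β := Finset.HasAntidiagonal.mem_antidiagonal.mp hp
      have h1 : Nw p.1 < L := by
        have : Nw p.1 + Nw p.2 = Nw β := by rw [← Nw_add, hp']
        omega
      have h2 : Nw p.2 < L := by
        have : Nw p.1 + Nw p.2 = Nw β := by rw [← Nw_add, hp']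
        omega
      rw [coeff_Ef' q π p.1 h1, coeff_gammaZk q k p.2 h2, Finset.sum_mul_sum]
    rw [Finset.sum_congr rfl hsum, Finset.sum_comm]
    apply Finset.sum_congr rfl
    intro j _
    rw [Finset.sum_comm]
    apply Finset.sum_congr rfl
    intro m _
    have hterm : ∀ p ∈ Finset.HasAntidiagonal.antidiagonal β,
        (((j.factorial : ℝ))⁻¹ * MvPowerSeries.coeff (R := ℝ) p.1 (q ^ j * Dzero^[j] π)) *
              ((((k + m).choose k : ℕ) : ℝ) *
                MvPowerSeries.coeff (R := ℝ) p.2 (q ^ m * zk (k + m)))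
          = ((j.factorial : ℝ))⁻¹ * ((((k + m).choose k : ℕ) : ℝ) *
              (MvPowerSeries.coeff (R := ℝ) p.1 (q ^ j * Dzero^[j] π) *
                MvPowerSeries.coeff (R := ℝ) p.2 (q ^ m * zk (k + m)))) := by
      intro p _
      ring
    rw [Finset.sum_congr rfl hterm, ← Finset.mul_sum, ← Finset.mul_sum,
      ← MvPowerSeries.coeff_mul]
    rw [hg]
    show ((j.factorial : ℝ))⁻¹ * ((((k + m).choose k : ℕ) : ℝ) *
        MvPowerSeries.coeff (R := ℝ) β (q ^ j * Dzero^[j] π * (q ^ m * zk (k + m))))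
      = ((j.factorial : ℝ))⁻¹ * ((((k + m).choose k : ℕ) : ℝ) *
        MvPowerSeries.coeff (R := ℝ) β (q ^ (j + m) * (Dzero^[j] π * zk (k + m))))
    rw [show q ^ j * Dzero^[j] π * (q ^ m * zk (k + m))
        = q ^ (j + m) * (Dzero^[j] π * zk (k + m)) by rw [pow_add]; ring]
  rw [hLHS, hRHS, triangle L g hgv]

lemma Ef_one (q : FPS) : Ef q 1 = 1 := by
  apply MvPowerSeries.ext; intro β
  rw [coeff_Ef, Finset.sum_eq_single_of_mem 0 (Finset.mem_range.mpr (by omega))]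
  · simp
  · intro l _ hl
    rw [iterate_Dzero_one (by omega), mul_zero, map_zero, mul_zero]

/-- Componentwise-finite linear functionals on power series. -/
def FinLin (F : FPS → ℝ) : Prop :=
  ∃ (S : Finset MIdx) (a : MIdx → ℝ),
    ∀ π : FPS, F π = ∑ γ ∈ S, a γ * MvPowerSeries.coeff (R := ℝ) γ π

lemma FinLin.congr {F G : FPS → ℝ} (h : ∀ π, F π = G π) (hF : FinLin F) : FinLin G := by
  obtain ⟨S, a, hr⟩ := hF
  exact ⟨S, a, fun π => by rw [← h, hr]⟩

lemma FinLin_zero : FinLin (fun _ => (0 : ℝ)) := ⟨∅, fun _ => 0, by simp⟩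

lemma FinLin_coeff (δ : MIdx) : FinLin (fun π => MvPowerSeries.coeff (R := ℝ) δ π) :=
  ⟨{δ}, fun _ => 1, by simp⟩

lemma FinLin.smul (r : ℝ) {F : FPS → ℝ} (hF : FinLin F) : FinLin (fun π => r * F π) := by
  obtain ⟨S, a, hr⟩ := hF
  refine ⟨S, fun γ => r * a γ, fun π => ?_⟩
  show r * F π = ∑ γ ∈ S, r * a γ * MvPowerSeries.coeff (R := ℝ) γ π
  rw [hr, Finset.mul_sum]
  exact Finset.sum_congr rfl fun γ _ => by ring

lemma FinLin.add {F G : FPS → ℝ} (hF : FinLin F) (hG : FinLin G) :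
    FinLin (fun π => F π + G π) := by
  classical
  obtain ⟨S, a, hFr⟩ := hF
  obtain ⟨T, b, hGr⟩ := hG
  refine ⟨S ∪ T, fun γ => (if γ ∈ S then a γ else 0) + (if γ ∈ T then b γ else 0), fun π => ?_⟩
  show F π + G π = ∑ γ ∈ S ∪ T,
    ((if γ ∈ S then a γ else 0) + (if γ ∈ T then b γ else 0)) * MvPowerSeries.coeff (R := ℝ) γ π
  rw [hFr, hGr]
  have h1 : ∑ γ ∈ S, a γ * MvPowerSeries.coeff (R := ℝ) γ π
      = ∑ γ ∈ S ∪ T, (if γ ∈ S then a γ else 0) * MvPowerSeries.coeff (R := ℝ) γ π := by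
    rw [← Finset.sum_subset Finset.subset_union_left
      (fun x _ hx => by rw [if_neg hx, zero_mul])]
    exact Finset.sum_congr rfl fun γ hγ => by rw [if_pos hγ]
  have h2 : ∑ γ ∈ T, b γ * MvPowerSeries.coeff (R := ℝ) γ π
      = ∑ γ ∈ S ∪ T, (if γ ∈ T then b γ else 0) * MvPowerSeries.coeff (R := ℝ) γ π := by
    rw [← Finset.sum_subset Finset.subset_union_right
      (fun x _ hx => by rw [if_neg hx, zero_mul])]
    exact Finset.sum_congr rfl fun γ hγ => by rw [if_pos hγ]
  rw [h1, h2, ← Finset.sum_add_distrib]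
  exact Finset.sum_congr rfl fun γ _ => by ring

lemma FinLin.sum {ι : Type*} (I : Finset ι) (F : ι → FPS → ℝ)
    (h : ∀ i ∈ I, FinLin (F i)) : FinLin (fun π => ∑ i ∈ I, F i π) := by
  classical
  induction I using Finset.induction_on with
  | empty => exact FinLin.congr (fun π => by simp) FinLin_zero
  | @insert i I hnot ih =>
    have := FinLin.add (h i (Finset.mem_insert_self i I))
      (ih fun j hj => h j (Finset.mem_insert_of_mem hj))
    exact FinLin.congr (fun π => by rw [Finset.sum_insert hnot]) this

lemma FinLin_Dterm (γ : MIdx) (s : ℕ) : FinLin (fun π => Dterm γ s π) := by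
  unfold Dterm
  by_cases h : γ (Sum.inl (s + 1)) = 0
  · exact FinLin.congr (fun π => by rw [if_pos h]) FinLin_zero
  · exact FinLin.congr (fun π => by rw [if_neg h])
      ((FinLin_coeff (γ + ek s - ek (s + 1))).smul _)

lemma FinLin.compD {F : FPS → ℝ} (hF : FinLin F) : FinLin (fun π => F (Dzero π)) := by
  obtain ⟨S, a, hr⟩ := hF
  have key : ∀ π : FPS, (∑ γ ∈ S, a γ * (∑ s ∈ Finset.range (Mb γ), Dterm γ s π))
      = F (Dzero π) := by
    intro π
    rw [hr (Dzero π)]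
    exact Finset.sum_congr rfl fun γ _ => by rw [coeff_Dzero γ π (Mb_spec γ)]
  apply FinLin.congr key
  apply FinLin.sum
  intro γ _
  exact ((FinLin.sum _ _ (fun s _ => FinLin_Dterm γ s)).smul (a γ))

lemma FinLin_coeff_iterate (l : ℕ) (δ : MIdx) :
    FinLin (fun π => MvPowerSeries.coeff (R := ℝ) δ (Dzero^[l] π)) := by
  induction l with
  | zero => exact FinLin_coeff δ
  | succ l ih =>
    exact FinLin.congr (fun π => by rw [← Function.iterate_succ_apply]) ih.compD

lemma FinLin_coeff_q_pow (q : FPS) (β : MIdx) (l : ℕ) :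
    FinLin (fun π => MvPowerSeries.coeff (R := ℝ) β (q ^ l * Dzero^[l] π)) := by
  classical
  have key : ∀ π : FPS, (∑ p ∈ Finset.HasAntidiagonal.antidiagonal β,
      MvPowerSeries.coeff (R := ℝ) p.1 (q ^ l) * MvPowerSeries.coeff (R := ℝ) p.2 (Dzero^[l] π))
      = MvPowerSeries.coeff (R := ℝ) β (q ^ l * Dzero^[l] π) := fun π =>
    (MvPowerSeries.coeff_mul _ _ _).symm
  apply FinLin.congr key
  apply FinLin.sum
  intro p _
  exact (FinLin_coeff_iterate l p.2).smul _

lemma FinLin_Ef (q : FPS) (β : MIdx) :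
    FinLin (fun π => MvPowerSeries.coeff (R := ℝ) β (Ef q π)) := by
  have key : ∀ π : FPS, (∑ l ∈ Finset.range (Nw β + 1),
      ((l.factorial : ℝ))⁻¹ * MvPowerSeries.coeff (R := ℝ) β (q ^ l * Dzero^[l] π))
      = MvPowerSeries.coeff (R := ℝ) β (Ef q π) := fun π => (coeff_Ef q π β).symm
  apply FinLin.congr key
  apply FinLin.sum
  intro l _
  exact (FinLin_coeff_q_pow q β l).smul _

lemma FinLin_applyG (Γ : MIdx → MIdx → ℝ) (hrow : RowFinite Γ) (β : MIdx) :
    FinLin (fun π => MvPowerSeries.coeff (R := ℝ) β (applyG Γ π)) := by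
  refine ⟨(hrow β).toFinset, Γ β, fun π => ?_⟩
  show MvPowerSeries.coeff (R := ℝ) β (applyG Γ π) = _
  rw [MvPowerSeries.coeff_apply]
  show (∑ᶠ γ : MIdx, Γ β γ * MvPowerSeries.coeff (R := ℝ) γ π) = _
  apply finsum_eq_sum_of_support_subset
  intro γ hγ
  simp only [Set.Finite.coe_toFinset, Set.mem_setOf_eq]
  intro h0
  exact hγ (by show Γ β γ * MvPowerSeries.coeff (R := ℝ) γ π = 0; rw [h0, zero_mul])

lemma FinLin_eq_on {F G : FPS → ℝ} (hF : FinLin F) (hG : FinLin G)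
    (h : ∀ γ : MIdx, (∀ n : Pos2, γ (Sum.inr n) = 0) →
      F (MvPowerSeries.monomial (R := ℝ) γ 1) = G (MvPowerSeries.monomial (R := ℝ) γ 1))
    (c : FPS) (hc : OnlyZk c) : F c = G c := by
  classical
  obtain ⟨S, a, hFr⟩ := hF
  obtain ⟨T, b, hGr⟩ := hG
  have hFm : ∀ γ : MIdx, F (MvPowerSeries.monomial (R := ℝ) γ 1) = if γ ∈ S then a γ else 0 := by
    intro γ
    rw [hFr]
    have hterm : ∀ δ ∈ S, a δ * MvPowerSeries.coeff (R := ℝ) δ (MvPowerSeries.monomial (R := ℝ) γ 1)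
        = if δ = γ then a δ else 0 := by
      intro δ _
      rw [MvPowerSeries.coeff_monomial]
      split_ifs <;> simp
    rw [Finset.sum_congr rfl hterm, Finset.sum_ite_eq' S γ a]
  have hGm : ∀ γ : MIdx, G (MvPowerSeries.monomial (R := ℝ) γ 1) = if γ ∈ T then b γ else 0 := by
    intro γ
    rw [hGr]
    have hterm : ∀ δ ∈ T, b δ * MvPowerSeries.coeff (R := ℝ) δ (MvPowerSeries.monomial (R := ℝ) γ 1)
        = if δ = γ then b δ else 0 := by
      intro δ _
      rw [MvPowerSeries.coeff_monomial]
      split_ifs <;> simp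
    rw [Finset.sum_congr rfl hterm, Finset.sum_ite_eq' T γ b]
  have hFc : F c = ∑ γ ∈ S ∪ T, F (MvPowerSeries.monomial (R := ℝ) γ 1)
      * MvPowerSeries.coeff (R := ℝ) γ c := by
    rw [hFr]
    rw [← Finset.sum_subset Finset.subset_union_left
      (fun x _ hx => by rw [hFm, if_neg hx, zero_mul])]
    exact Finset.sum_congr rfl fun γ hγ => by rw [hFm, if_pos hγ]
  have hGc : G c = ∑ γ ∈ S ∪ T, G (MvPowerSeries.monomial (R := ℝ) γ 1)
      * MvPowerSeries.coeff (R := ℝ) γ c := by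
    rw [hGr]
    rw [← Finset.sum_subset Finset.subset_union_right
      (fun x _ hx => by rw [hGm, if_neg hx, zero_mul])]
    exact Finset.sum_congr rfl fun γ hγ => by rw [hGm, if_pos hγ]
  rw [hFc, hGc]
  apply Finset.sum_congr rfl
  intro γ _
  by_cases hz : ∀ n : Pos2, γ (Sum.inr n) = 0
  · rw [h γ hz]
  · push_neg at hz
    rw [hc γ hz, mul_zero, mul_zero]

/-- degree of a multi-index -/
def deg (γ : MIdx) : ℕ := γ.sum fun _ m => m

lemma deg_add (β γ : MIdx) : deg (β + γ) = deg β + deg γ := by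
  classical
  unfold deg
  apply Finsupp.sum_add_index' <;> intro j <;> simp

lemma applyG_monomial_eq (q : FPS) (Γ : MIdx → MIdx → ℝ)
    (hmul : ∀ π π' : FPS, applyG Γ (π * π') = applyG Γ π * applyG Γ π')
    (hone : applyG Γ 1 = 1)
    (hzk : ∀ k : ℕ, applyG Γ (zk k) = gammaZk q k) :
    ∀ γ : MIdx, (∀ n : Pos2, γ (Sum.inr n) = 0) →
      applyG Γ (MvPowerSeries.monomial (R := ℝ) γ 1) = Ef q (MvPowerSeries.monomial (R := ℝ) γ 1) := by
  suffices H : ∀ (d : ℕ) (γ : MIdx), deg γ = d → (∀ n : Pos2, γ (Sum.inr n) = 0) →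
      applyG Γ (MvPowerSeries.monomial (R := ℝ) γ 1) = Ef q (MvPowerSeries.monomial (R := ℝ) γ 1) by
    intro γ hγ; exact H (deg γ) γ rfl hγ
  intro d
  induction d using Nat.strong_induction_on with
  | _ d ih =>
    intro γ hd hz
    by_cases h0 : γ = 0
    · subst h0
      rw [MvPowerSeries.monomial_zero_one, hone, Ef_one]
    · obtain ⟨j, hj⟩ := Finsupp.support_nonempty_iff.mpr h0
      rcases j with k | n
      · have hk : γ (Sum.inl k) ≠ 0 := Finsupp.mem_support_iff.mp hj
        have hle : Finsupp.single (Sum.inl k : Var) 1 ≤ γ := by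
          rw [Finsupp.single_le_iff]; omega
        set γ' : MIdx := γ - Finsupp.single (Sum.inl k) 1 with hγ'def
        have hγ : γ' + Finsupp.single (Sum.inl k) 1 = γ := tsub_add_cancel_of_le hle
        have hdeg : deg γ' + 1 = d := by
          have := congrArg deg hγ
          rw [deg_add] at this
          have hds : deg (Finsupp.single (Sum.inl k : Var) 1) = 1 := by
            unfold deg
            rw [Finsupp.sum_single_index] <;> simp
          omega
        have hz' : ∀ n : Pos2, γ' (Sum.inr n) = 0 := by
          intro n
          have h1 := hz n
          have h2 : γ' (Sum.inr n) ≤ γ (Sum.inr n) := by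
            rw [hγ'def, Finsupp.tsub_apply]; omega
          omega
        have hmono : MvPowerSeries.monomial (R := ℝ) γ (1 : ℝ)
            = MvPowerSeries.monomial (R := ℝ) γ' 1 * zk k := by
          rw [zk, MvPowerSeries.X_def, MvPowerSeries.monomial_mul_monomial, mul_one, hγ]
        rw [hmono, hmul, hzk, ih (deg γ') (by omega) γ' rfl hz', ← Ef_mul_zk]
      · exact absurd (hz n) (Finsupp.mem_support_iff.mp hj)

end Stmt17Aux

/-- Exponential formula on the subalgebra ℝ[[z_k]] (second item of (cw27)/(cw35)):
if a row-finite unital algebra endomorphism `Γ*` satisfies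
`Γ* z_k = Σ_l (k+l choose k) q^l z_{k+l}`, then for every `c ∈ ℝ[[z_k]]` the sum
`Σ_l (1/l!) q^l (D⁽⁰⁾)^l c` is componentwise finite and equals `Γ* c`. -/
theorem stmt_17 (q : FPS) (Γ : MIdx → MIdx → ℝ) (hrow : RowFinite Γ)
    (hmul : ∀ π π' : FPS, applyG Γ (π * π') = applyG Γ π * applyG Γ π')
    (hone : applyG Γ 1 = 1)
    (hzk : ∀ k : ℕ, applyG Γ (zk k) = gammaZk q k)
    (c : FPS) (hc : OnlyZk c) :
    (∀ β : MIdx, {l : ℕ | MvPowerSeries.coeff (R := ℝ) β (q ^ l * Dzero^[l] c) ≠ 0}.Finite) ∧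
    ∀ β : MIdx, MvPowerSeries.coeff (R := ℝ) β (applyG Γ c)
      = ∑ᶠ l : ℕ, ((l.factorial : ℝ))⁻¹ * MvPowerSeries.coeff (R := ℝ) β (q ^ l * Dzero^[l] c) := by
  classical
  constructor
  · intro β
    apply Set.Finite.subset (Finset.range (Stmt17Aux.Nw β + 1)).finite_toSet
    intro l hl
    simp only [Set.mem_setOf_eq] at hl
    simp only [Finset.coe_range, Set.mem_Iio]
    by_contra hc
    exact hl (Stmt17Aux.coeff_q_pow_mul_eq_zero q (by omega) c)
  · intro β
    rw [Stmt17Aux.Ef_eq_finsum q c β]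
    exact Stmt17Aux.FinLin_eq_on (Stmt17Aux.FinLin_applyG Γ hrow β) (Stmt17Aux.FinLin_Ef q β)
      (fun γ hγ => by
        rw [Stmt17Aux.applyG_monomial_eq q Γ hmul hone hzk γ hγ]) c hc
end
end
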